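/- Let Γ ≤ Isom(ℝ³) be generated by σ₁: (x,y,z) ↦ (−x, y, z+b) and σ₂: (x,y,z) ↦ (x, y + a/2, −z), with a, b > 0. Then Γ acts freely on ℝ³ and contains an element with orientation-reversing linear part. -/

import Mathlib

noncomputable section

/-- Euclidean space `E^n`. -/
abbrev E (n : ℕ) : Type := EuclideanSpace ℝ (Fin n)

/-- Discreteness of a group of isometries, expressed as proper discontinuity of its action. -/
def IsDiscreteGrp {n : ℕ} (Γ : Subgroup (E n ≃ᵢ E n)) : Prop :=
  ∀ K : Set (E n), IsCompact K →
    {γ : E n ≃ᵢ E n | γ ∈ Γ ∧ ((γ '' K) ∩ K).Nonempty}.Finite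

/-- Cocompactness of a group of isometries of `E^n`. -/
def IsCocompactGrp {n : ℕ} (Γ : Subgroup (E n ≃ᵢ E n)) : Prop :=
  ∃ K : Set (E n), IsCompact K ∧ ∀ x : E n, ∃ γ ∈ Γ, γ x ∈ K

/-- The action of `Γ` on `E^n` is free. -/
def ActsFreely {n : ℕ} (Γ : Subgroup (E n ≃ᵢ E n)) : Prop :=
  ∀ γ ∈ Γ, (∃ x : E n, γ x = x) → γ = 1

/-- A crystallographic group: discrete and cocompact. -/
def IsCrystallographic {n : ℕ} (Γ : Subgroup (E n ≃ᵢ E n)) : Prop :=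
  IsDiscreteGrp Γ ∧ IsCocompactGrp Γ

/-- A Bieberbach group: discrete, cocompact, acting freely. -/
def IsBieberbach {n : ℕ} (Γ : Subgroup (E n ≃ᵢ E n)) : Prop :=
  IsDiscreteGrp Γ ∧ IsCocompactGrp Γ ∧ ActsFreely Γ

/-- `f` is a translation. -/
def IsTranslation {n : ℕ} (f : E n ≃ᵢ E n) : Prop :=
  ∃ a : E n, ∀ x : E n, f x = x + a

/-- The linear isometry `(x,y,z) ↦ (-x,y,z)` of `E³`. -/
def reflFirst : E 3 ≃ₗᵢ[ℝ] E 3 :=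
  LinearIsometryEquiv.piLpCongrRight 2
    (fun i : Fin 3 => if i = 0 then LinearIsometryEquiv.neg ℝ else LinearIsometryEquiv.refl ℝ ℝ)

theorem reflFirst_det :
    LinearMap.det ((reflFirst.toLinearEquiv : E 3 →ₗ[ℝ] E 3)) = -1 := by
  classical
  let bas := (EuclideanSpace.basisFun (Fin 3) ℝ).toBasis
  rw [← LinearMap.det_toMatrix bas]
  have hM : LinearMap.toMatrix bas bas (reflFirst.toLinearEquiv : E 3 →ₗ[ℝ] E 3)
      = Matrix.diagonal ![-1, 1, 1] := by
    ext i j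
    fin_cases i <;> fin_cases j <;>
      simp [LinearMap.toMatrix_apply, bas, reflFirst,
        LinearIsometryEquiv.piLpCongrRight_apply, EuclideanSpace.single_apply, Matrix.diagonal]
  rw [hM, Matrix.det_diagonal]
  simp [Fin.prod_univ_three]

/-- the subgroup of `Isom(ℝ³)` generated by the glide reflections
`σ₁ : (x,y,z) ↦ (-x, y, z + b)` and `σ₂ : (x,y,z) ↦ (x, y + a/2, -z)` acts freely
on `ℝ³` and contains an element with orientation-reversing linear part. -/
theorem KK_group_free_nonorientable (a b : ℝ) (ha : 0 < a) (hb : 0 < b)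
    (σ₁ σ₂ : E 3 ≃ᵢ E 3)
    (hσ₁ : ∀ x : E 3, σ₁ x = ![-(x 0), x 1, x 2 + b])
    (hσ₂ : ∀ x : E 3, σ₂ x = ![x 0, x 1 + a / 2, -(x 2)]) :
    ActsFreely (Subgroup.closure {σ₁, σ₂}) ∧
    (∃ γ ∈ Subgroup.closure {σ₁, σ₂}, ∃ A : E 3 ≃ₗᵢ[ℝ] E 3,
      (∀ x : E 3, γ x = A x + γ 0) ∧
      LinearMap.det (A.toLinearEquiv : E 3 →ₗ[ℝ] E 3) = -1) := by
  classical
  have hsq : ∀ k : ℤ, ((k.negOnePow : ℤ) : ℝ) * ((k.negOnePow : ℤ) : ℝ) = 1 := by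
    intro k; rcases Int.units_eq_one_or k.negOnePow with h | h <;> simp [h]
  -- normal form for elements of the closure
  have key : ∀ γ ∈ Subgroup.closure {σ₁, σ₂}, ∃ (m n : ℤ) (s : ℝ), ∀ x : E 3,
      γ x = ![((m.negOnePow : ℤ) : ℝ) * x 0 + s, x 1 + (n : ℝ) * (a / 2),
              ((n.negOnePow : ℤ) : ℝ) * x 2 + (m : ℝ) * b] := by
    intro γ hγ
    induction hγ using Subgroup.closure_induction with
    | mem g hg =>
      rcases hg with hg | hg
      · exact ⟨1, 0, 0, by subst hg; intro x; rw [hσ₁]; norm_num⟩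
      · exact ⟨0, 1, 0, by subst hg; intro x; rw [hσ₂]; norm_num⟩
    | one => exact ⟨0, 0, 0, by intro x; simp; funext i; fin_cases i <;> rfl⟩
    | mul g g' _ _ ih ih' =>
      obtain ⟨m, n, s, hg⟩ := ih
      obtain ⟨m', n', s', hg'⟩ := ih'
      refine ⟨m + (n.negOnePow : ℤ) * m', n + n', ((m.negOnePow : ℤ) : ℝ) * s' + s, ?_⟩
      intro x
      have h1 : (g * g') x = g (g' x) := rfl
      rw [h1, hg, hg' x]
      have e0 : ((m + (n.negOnePow : ℤ) * m').negOnePow : ℤ)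
          = ((m.negOnePow : ℤ)) * ((m'.negOnePow : ℤ)) := by
        rcases Int.units_eq_one_or n.negOnePow with h | h <;>
          simp [Int.negOnePow_add, h, Int.negOnePow_neg]
      have e2 : (((n + n').negOnePow : ℤ)) = ((n.negOnePow : ℤ)) * ((n'.negOnePow : ℤ)) := by
        simp [Int.negOnePow_add]
      funext i
      fin_cases i <;>
        simp only [Matrix.cons_val_zero, Matrix.cons_val_one, Matrix.head_cons,
          Matrix.cons_val_two, Matrix.tail_cons] <;>
        push_cast [e0, e2] <;> ring_nf
    | inv g _ ih =>
      obtain ⟨m, n, s, hg⟩ := ih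
      refine ⟨-((n.negOnePow : ℤ) * m), -n, -(((m.negOnePow : ℤ) : ℝ) * s), ?_⟩
      intro y
      have e0 : (((-((n.negOnePow : ℤ) * m)).negOnePow : ℤ)) = ((m.negOnePow : ℤ)) := by
        rcases Int.units_eq_one_or n.negOnePow with h | h <;>
          simp [Int.negOnePow_neg, h]
      have e2 : (((-n).negOnePow : ℤ)) = ((n.negOnePow : ℤ)) := by simp [Int.negOnePow_neg]
      set w : E 3 := WithLp.toLp 2 ![((m.negOnePow : ℤ) : ℝ) * (y 0 - s), y 1 - (n : ℝ) * (a / 2),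
          ((n.negOnePow : ℤ) : ℝ) * (y 2 - (m : ℝ) * b)] with hwdef
      have hw : g w = y := by
        apply WithLp.ofLp_injective
        rw [hg]
        have c0 : ((m.negOnePow : ℤ) : ℝ) * (w 0) + s = y 0 := by
          have h0 : w 0 = ((m.negOnePow : ℤ) : ℝ) * (y 0 - s) := rfl
          rw [h0, show ((m.negOnePow : ℤ) : ℝ) * (((m.negOnePow : ℤ) : ℝ) * (y 0 - s)) + s
            = (((m.negOnePow : ℤ) : ℝ) * ((m.negOnePow : ℤ) : ℝ)) * (y 0 - s) + s by ring,
            hsq m]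
          ring
        have c1 : (w 1) + (n : ℝ) * (a / 2) = y 1 := by
          have h1 : w 1 = y 1 - (n : ℝ) * (a / 2) := rfl
          rw [h1]; ring
        have c2 : ((n.negOnePow : ℤ) : ℝ) * (w 2) + (m : ℝ) * b = y 2 := by
          have h2 : w 2 = ((n.negOnePow : ℤ) : ℝ) * (y 2 - (m : ℝ) * b) := rfl
          rw [h2, show ((n.negOnePow : ℤ) : ℝ) * (((n.negOnePow : ℤ) : ℝ) * (y 2 - (m : ℝ) * b))
              + (m : ℝ) * b
            = (((n.negOnePow : ℤ) : ℝ) * ((n.negOnePow : ℤ) : ℝ)) * (y 2 - (m : ℝ) * b)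
              + (m : ℝ) * b by ring, hsq n]
          ring
        rw [c0, c1, c2]
        funext i; fin_cases i <;> rfl
      have hinv : g⁻¹ y = w := by
        rw [← hw]; exact g.inv_apply_self w
      rw [hinv, hwdef, WithLp.ofLp_toLp]
      funext i
      fin_cases i <;>
        simp only [Matrix.cons_val_zero, Matrix.cons_val_one, Matrix.head_cons,
          Matrix.cons_val_two, Matrix.tail_cons] <;>
        push_cast [e0, e2] <;> ring_nf
  constructor
  · -- freeness
    intro γ hγ hfix
    obtain ⟨m, n, s, hg⟩ := key γ hγ
    obtain ⟨x, hx⟩ := hfix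
    have hvec : (![((m.negOnePow : ℤ) : ℝ) * x 0 + s, x 1 + (n : ℝ) * (a / 2),
        ((n.negOnePow : ℤ) : ℝ) * x 2 + (m : ℝ) * b] : Fin 3 → ℝ) = x :=
      (hg x).symm.trans (by rw [hx])
    have h1 : x 1 + (n : ℝ) * (a / 2) = x 1 := congrFun hvec 1
    have hn : n = 0 := by
      have : (n : ℝ) * (a / 2) = 0 := by linarith
      have ha2 : a / 2 ≠ 0 := by positivity
      exact_mod_cast (mul_eq_zero.1 this).resolve_right ha2
    have h2 : ((n.negOnePow : ℤ) : ℝ) * x 2 + (m : ℝ) * b = x 2 := congrFun hvec 2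
    have hm : m = 0 := by
      rw [hn] at h2
      simp only [Int.negOnePow_zero] at h2
      have : (m : ℝ) * b = 0 := by
        simp only [Units.val_one, Int.cast_one, one_mul] at h2; linarith
      exact_mod_cast (mul_eq_zero.1 this).resolve_right (ne_of_gt hb)
    have h0 : ((m.negOnePow : ℤ) : ℝ) * x 0 + s = x 0 := congrFun hvec 0
    have hs : s = 0 := by
      rw [hm] at h0
      simp only [Int.negOnePow_zero, Units.val_one, Int.cast_one, one_mul] at h0
      linarith
    apply IsometryEquiv.ext
    intro y
    apply WithLp.ofLp_injective
    rw [hg y, hn, hm, hs]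
    simp only [Int.negOnePow_zero, Units.val_one, Int.cast_one, one_mul, Int.cast_zero,
      zero_mul, add_zero, IsometryEquiv.coe_one, id_eq]
    funext i; fin_cases i <;> rfl
  · -- σ₁ is orientation-reversing
    refine ⟨σ₁, Subgroup.subset_closure (Set.mem_insert _ _), reflFirst, ?_, reflFirst_det⟩
    intro x
    have h0 : σ₁ (0 : E 3) = ![0, 0, b] := by
      rw [hσ₁]
      have : ∀ i : Fin 3, (0 : E 3) i = 0 := fun i => rfl
      rw [this 0, this 1, this 2]; norm_num
    apply WithLp.ofLp_injective
    rw [hσ₁ x]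
    have hA : ∀ j : Fin 3, (reflFirst x) j = (if j = 0 then -(x j) else x j) := by
      intro j
      by_cases hj : j = 0
      · subst hj
        simp [reflFirst, LinearIsometryEquiv.piLpCongrRight_apply,
          WithLp.ofLp_toLp]
      · simp [reflFirst, LinearIsometryEquiv.piLpCongrRight_apply, hj,
          WithLp.ofLp_toLp]
    have hsum : ∀ j : Fin 3, (reflFirst x + σ₁ 0) j = reflFirst x j + (σ₁ 0) j :=
      fun _ => rfl
    have h0' : ∀ j : Fin 3, (σ₁ 0) j = (![0, 0, b] : Fin 3 → ℝ) j := fun j => congrFun h0 j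
    funext i
    fin_cases i <;> rw [hsum, hA, h0'] <;> norm_num <;> rfl
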